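/- Let R be a commutative Noetherian ring and J an ideal with only finitely many minimal primes p_1, ..., p_r, all of the same height i. Let S ⊆ {1,...,r} and K = ∩_{s ∉ S} p_s (with K = R if S = {1,...,r}). Then the minimal primes of J : K^∞ of height i are exactly {p_s : s ∈ S}, provided p_s ⊉ K for all s ∈ S. -/

import Mathlib

/-- The saturation `J : K^∞ = ⋃ₙ (J : Kⁿ)`. -/
noncomputable def idealSaturation {R : Type*} [CommRing R] (J K : Ideal R) : Ideal R :=
  ⨆ n : ℕ, Submodule.colon J ((K ^ n : Ideal R) : Set R)

/-- Let `R` be a commutative Noetherian ring and `J` an ideal whose minimal primes are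
exactly the pairwise distinct primes `p_1, …, p_r`, all of height `i`.  Let
`S ⊆ {1, …, r}` and `K = ⋂_{s ∉ S} p_s` (with `K = R` if `S = {1,…,r}`).  If `p_s ⊉ K`
for all `s ∈ S`, then the minimal primes of `J : K^∞` of height `i` are exactly
`{p_s : s ∈ S}`. -/
theorem stmt9 (R : Type*) [CommRing R] [IsNoetherianRing R]
    (J : Ideal R) (r : ℕ) (i : ℕ) (p : Fin r → PrimeSpectrum R)
    (hinj : Function.Injective p)
    (hmin : {q : PrimeSpectrum R | q.asIdeal ∈ J.minimalPrimes} = Set.range p)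
    (hht : ∀ s, Order.height (p s) = (i : ℕ∞))
    (S : Finset (Fin r))
    (K : Ideal R) (hK : K = ⨅ s ∈ Sᶜ, (p s).asIdeal)
    (hKS : ∀ s ∈ S, ¬ K ≤ (p s).asIdeal) :
    {q : PrimeSpectrum R |
        q.asIdeal ∈ (idealSaturation J K).minimalPrimes ∧ Order.height q = (i : ℕ∞)} =
      p '' ↑S := by
  set sat := idealSaturation J K with hsat
  -- every p t is a minimal prime of J
  have hpmin : ∀ t, (p t).asIdeal ∈ J.minimalPrimes := by
    intro t
    have : p t ∈ {q : PrimeSpectrum R | q.asIdeal ∈ J.minimalPrimes} := by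
      rw [hmin]; exact ⟨t, rfl⟩
    exact this
  have hJp : ∀ t, J ≤ (p t).asIdeal := fun t => (hpmin t).1.2
  -- J ≤ sat
  have hJsat : J ≤ sat := by
    have h0 : Submodule.colon J ((K ^ 0 : Ideal R) : Set R) = J := by
      rw [pow_zero, Ideal.one_eq_top]
      ext x
      rw [Submodule.mem_colon]
      constructor
      · intro h; simpa [smul_eq_mul] using h 1 Submodule.mem_top
      · intro h y _; simpa [smul_eq_mul] using J.mul_mem_right y h
    calc J = Submodule.colon J ((K ^ 0 : Ideal R) : Set R) := h0.symm
      _ ≤ sat := le_iSup (fun n : ℕ => Submodule.colon J ((K ^ n : Ideal R) : Set R)) 0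
  -- Lemma A : sat ≤ p s for s ∈ S
  have hA : ∀ s ∈ S, sat ≤ (p s).asIdeal := by
    intro s hs
    apply iSup_le
    intro n x hx
    obtain ⟨k, hkK, hknp⟩ := SetLike.not_le_iff_exists.mp (hKS s hs)
    have hkn : k ^ n ∈ K ^ n := Ideal.pow_mem_pow hkK n
    have : x * k ^ n ∈ J := by
      have := Submodule.mem_colon.mp hx (k ^ n) hkn
      simpa [smul_eq_mul] using this
    have hxk : x * k ^ n ∈ (p s).asIdeal := hJp s this
    rcases (p s).isPrime.mem_or_mem hxk with h | h
    · exact h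
    · exact absurd ((p s).isPrime.mem_of_pow_mem n h) hknp
  -- radical sat = ⨅ s ∈ S, p s
  have hradsat : sat.radical = ⨅ s ∈ S, (p s).asIdeal := by
    apply le_antisymm
    · apply le_iInf₂
      intro s hs
      rw [← (p s).isPrime.radical]
      exact Ideal.radical_mono (hA s hs)
    · intro x hx
      simp only [Ideal.mem_iInf] at hx
      -- span{x} * K ≤ radical J
      have hxK : Ideal.span {x} * K ≤ J.radical := by
        rw [Ideal.radical_eq_sInf]
        apply le_sInf
        rintro q ⟨hJq, hq⟩
        haveI := hq
        obtain ⟨P, hP, hPq⟩ := Ideal.exists_minimalPrimes_le hJq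
        have : (⟨P, hP.1.1⟩ : PrimeSpectrum R) ∈ Set.range p := by
          rw [← hmin]; exact hP
        obtain ⟨t, ht⟩ := this
        have hPt : (p t).asIdeal = P := congrArg PrimeSpectrum.asIdeal ht
        refine le_trans ?_ (hPt ▸ hPq)
        by_cases htS : t ∈ S
        · calc Ideal.span {x} * K ≤ Ideal.span {x} * ⊤ := Ideal.mul_mono_right le_top
            _ = Ideal.span {x} := by rw [Ideal.mul_top]
            _ ≤ (p t).asIdeal := by
                rw [Ideal.span_le, Set.singleton_subset_iff]; exact hx t htS
        · have hKt : K ≤ (p t).asIdeal := by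
            rw [hK]
            exact iInf₂_le t (Finset.mem_compl.mpr htS)
          calc Ideal.span {x} * K ≤ ⊤ * K := Ideal.mul_mono_left le_top
            _ = K := by rw [Ideal.top_mul]
            _ ≤ (p t).asIdeal := hKt
      obtain ⟨n, hn⟩ := Ideal.exists_pow_le_of_le_radical_of_fg hxK
        (Submodule.FG.mul (IsNoetherian.noetherian _) (IsNoetherian.noetherian _))
      rw [Ideal.mem_radical_iff]
      refine ⟨n, ?_⟩
      have hx' : x ^ n ∈ Submodule.colon J ((K ^ n : Ideal R) : Set R) := by
        rw [Submodule.mem_colon]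
        intro y hy
        have : x ^ n * y ∈ Ideal.span {x} ^ n * K ^ n := by
          apply Ideal.mul_mem_mul
          · rw [Ideal.span_singleton_pow]; exact Ideal.mem_span_singleton_self _
          · exact hy
        rw [← mul_pow] at this
        simpa [smul_eq_mul] using hn this
      exact (le_iSup (fun n => Submodule.colon J ((K ^ n : Ideal R) : Set R)) n) hx'
  -- p s is a minimal prime of sat, for s ∈ S
  have hBmin : ∀ s ∈ S, (p s).asIdeal ∈ sat.minimalPrimes := by
    intro s hs
    refine ⟨⟨(p s).isPrime, hA s hs⟩, ?_⟩
    rintro q ⟨hq, hsatq⟩ hqps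
    exact (hpmin s).2 ⟨hq, le_trans hJsat hsatq⟩ hqps
  ext q
  simp only [Set.mem_setOf_eq, Set.mem_image, Finset.mem_coe]
  constructor
  · rintro ⟨hqmin, hqht⟩
    -- q contains ⨅ s∈S p s, so some p s ≤ q
    have hinf : ⨅ s ∈ S, (p s).asIdeal ≤ q.asIdeal := by
      rw [← hradsat]
      calc sat.radical ≤ q.asIdeal.radical := Ideal.radical_mono hqmin.1.2
        _ = q.asIdeal := q.isPrime.radical
    have hprod : (∏ s ∈ S, (p s).asIdeal) ≤ q.asIdeal :=
      le_trans Ideal.prod_le_inf (by simpa [Finset.inf_eq_iInf] using hinf)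
    obtain ⟨s, hs, hsq⟩ := (q.isPrime.prod_le).mp hprod
    have : q.asIdeal ≤ (p s).asIdeal := hqmin.2 ⟨(p s).isPrime, hA s hs⟩ hsq
    have heq : p s = q := PrimeSpectrum.ext (le_antisymm hsq this)
    exact ⟨s, hs, heq⟩
  · rintro ⟨s, hs, rfl⟩
    exact ⟨hBmin s hs, hht s⟩
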